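/- For every n ≥ 1, the sum over all 2-colored partitions of K_3 × P_n of the size of the partition equals 2^(3n-5)·(37 + 19n); that is, Σ_{i≥1} i·c(n,i) = 2^(3n-5)·(37 + 19n). Equivalently, the expected size of the partition induced by assigning one of two colors uniformly and independently to each of the 3n vertices of K_3 × P_n equals 2^(3n-5)·(37 + 19n)/2^(3n). -/

import Mathlib

open SimpleGraph Polynomial

/-- A 2-colored partition of a simple graph `G`: a partition of the vertex set into
nonempty parts, each inducing a connected subgraph, together with an assignment of one
of two colors to each part such that distinct parts joined by an edge get different colors. -/
structure TwoColoredPartition {V : Type*} (G : SimpleGraph V) where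
  parts : Set (Set V)
  nonempty : ∀ p ∈ parts, p.Nonempty
  covers : ∀ v : V, ∃ p, p ∈ parts ∧ v ∈ p
  disj : ∀ p ∈ parts, ∀ q ∈ parts, p ≠ q → Disjoint p q
  conn : ∀ p ∈ parts, (G.induce p).Connected
  color : parts → Fin 2
  proper : ∀ p q : parts, p ≠ q →
    (∃ v ∈ (p : Set V), ∃ w ∈ (q : Set V), G.Adj v w) → color p ≠ color q

/-- The size of a 2-colored partition: its number of parts. -/
noncomputable def TwoColoredPartition.size {V : Type*} {G : SimpleGraph V}
    (T : TwoColoredPartition G) : ℕ :=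
  T.parts.ncard

section Mono
variable {V : Type*} (G : SimpleGraph V) (f : V → Fin 2)

/-- The monochromatic subgraph of `G` under coloring `f`. -/
def monoGraph : SimpleGraph V where
  Adj u v := G.Adj u v ∧ f u = f v
  symm := ⟨fun u v ⟨h, e⟩ => ⟨h.symm, e.symm⟩⟩
  loopless := ⟨fun v h => G.loopless.irrefl v h.1⟩

variable {G f}

lemma monoGraph_adj {u v : V} : (monoGraph G f).Adj u v ↔ G.Adj u v ∧ f u = f v := Iff.rfl

lemma monoGraph_le : monoGraph G f ≤ G := fun _ _ h => h.1

lemma eq_of_reachable {u v : V} (h : (monoGraph G f).Reachable u v) : f u = f v := by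
  obtain ⟨p⟩ := h
  induction p with
  | nil => rfl
  | cons h p ih => exact h.2.trans ih

lemma supp_const {C : (monoGraph G f).ConnectedComponent} {u v : V}
    (hu : u ∈ C.supp) (hv : v ∈ C.supp) : f u = f v := by
  rw [SimpleGraph.ConnectedComponent.mem_supp_iff] at hu hv
  exact eq_of_reachable (SimpleGraph.ConnectedComponent.eq.mp (hu.trans hv.symm))

/-- Walk support stays in the component's support. -/
lemma walk_support_subset {G' : SimpleGraph V} {u v : V} (p : G'.Walk u v) {w : V}
    (hw : w ∈ p.support) : G'.Reachable u w := by
  classical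
  exact (p.takeUntil w hw).reachable

lemma supp_induce_connected (C : (monoGraph G f).ConnectedComponent) :
    (G.induce C.supp).Connected := by
  have key : ((monoGraph G f).induce C.supp).Connected := by
    rw [SimpleGraph.connected_induce_iff,
      SimpleGraph.Subgraph.connected_iff_forall_exists_walk_subgraph]
    constructor
    · obtain ⟨v, hv⟩ := C.exists_rep
      exact ⟨v, hv⟩
    · intro u v hu hv
      simp only [SimpleGraph.Subgraph.induce_verts] at hu hv
      rw [SimpleGraph.ConnectedComponent.mem_supp_iff] at hu hv
      obtain ⟨p⟩ := SimpleGraph.ConnectedComponent.eq.mp (hu.trans hv.symm)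
      refine ⟨p, le_trans p.toSubgraph_le_induce_support ?_⟩
      apply SimpleGraph.Subgraph.induce_mono le_rfl
      intro w hw
      rw [SimpleGraph.ConnectedComponent.mem_supp_iff, ← hu]
      exact (SimpleGraph.ConnectedComponent.eq.mpr (walk_support_subset p hw)).symm
  refine key.mono ?_
  intro x y h
  exact h.1

end Mono

section ToTCP
variable {V : Type*} {G : SimpleGraph V} {f : V → Fin 2}

open Classical in
/-- color of a set: value of f at a chosen point. -/
noncomputable def colorOf (f : V → Fin 2) (s : Set V) : Fin 2 :=
  if h : s.Nonempty then f h.choose else 0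

lemma colorOf_eq {s : Set V} (hc : ∀ x ∈ s, ∀ y ∈ s, f x = f y) {v : V} (hv : v ∈ s) :
    colorOf f s = f v := by
  have h : s.Nonempty := ⟨v, hv⟩
  rw [colorOf, dif_pos h]
  exact hc _ h.choose_spec _ hv

/-- The 2-colored partition associated to a coloring. -/
noncomputable def toTCP (G : SimpleGraph V) (f : V → Fin 2) : TwoColoredPartition G where
  parts := Set.range (fun C : (monoGraph G f).ConnectedComponent => C.supp)
  nonempty := by
    rintro p ⟨C, rfl⟩
    obtain ⟨v, hv⟩ := C.exists_rep
    exact ⟨v, hv⟩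
  covers := fun v => ⟨((monoGraph G f).connectedComponentMk v).supp, ⟨_, rfl⟩, rfl⟩
  disj := by
    rintro p ⟨C, rfl⟩ q ⟨D, rfl⟩ hne
    rw [Set.disjoint_left]
    intro v hv hv'
    rw [SimpleGraph.ConnectedComponent.mem_supp_iff] at hv hv'
    exact hne (by rw [← hv, ← hv'])
  conn := by
    rintro p ⟨C, rfl⟩
    exact supp_induce_connected C
  color := fun p => colorOf f p
  proper := by
    rintro ⟨p, C, rfl⟩ ⟨q, D, rfl⟩ hne ⟨v, hv, w, hw, hadj⟩ hcol
    have h1 : colorOf f C.supp = f v := colorOf_eq (fun x hx y hy => supp_const hx hy) hv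
    have h2 : colorOf f D.supp = f w := colorOf_eq (fun x hx y hy => supp_const hx hy) hw
    have hfv : f v = f w := by
      simpa [h1, h2] using hcol
    have : (monoGraph G f).Adj v w := ⟨hadj, hfv⟩
    have hCD : C = D := by
      rw [SimpleGraph.ConnectedComponent.mem_supp_iff] at hv hw
      rw [← hv, ← hw]
      exact SimpleGraph.ConnectedComponent.eq.mpr this.reachable
    exact hne (by simp [hCD])

/-- Recover the coloring from a 2-colored partition. -/
noncomputable def decode (T : TwoColoredPartition G) : V → Fin 2 :=
  fun v => T.color ⟨(T.covers v).choose, (T.covers v).choose_spec.1⟩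

lemma part_eq_of_mem {T : TwoColoredPartition G} {p q : Set V} (hp : p ∈ T.parts)
    (hq : q ∈ T.parts) {v : V} (hvp : v ∈ p) (hvq : v ∈ q) : p = q := by
  by_contra hne
  exact Set.disjoint_left.mp (T.disj p hp q hq hne) hvp hvq

lemma decode_eq {T : TwoColoredPartition G} {p : Set V} (hp : p ∈ T.parts) {v : V}
    (hv : v ∈ p) : decode T v = T.color ⟨p, hp⟩ := by
  have h := (T.covers v).choose_spec
  have : (T.covers v).choose = p := part_eq_of_mem h.1 hp h.2 hv
  rw [decode]
  congr 1
  exact Subtype.ext this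

lemma decode_toTCP (f : V → Fin 2) : decode (toTCP G f) = f := by
  funext v
  have hp : ((monoGraph G f).connectedComponentMk v).supp ∈ (toTCP G f).parts := ⟨_, rfl⟩
  have hv : v ∈ ((monoGraph G f).connectedComponentMk v).supp := rfl
  rw [decode_eq hp hv]
  exact colorOf_eq (fun x hx y hy => supp_const hx hy) hv

end ToTCP

section Inv
variable {V : Type*} {G : SimpleGraph V}

lemma reachable_mono_of_induce {f : V → Fin 2} {s : Set V}
    (hconst : ∀ x ∈ s, ∀ y ∈ s, f x = f y) {a b : s} (p : (G.induce s).Walk a b) :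
    (monoGraph G f).Reachable ↑a ↑b := by
  induction p with
  | nil => exact SimpleGraph.Reachable.refl _
  | @cons u x w h _ ih =>
    have hadj : (monoGraph G f).Adj ↑u ↑x := ⟨h, hconst _ u.2 _ x.2⟩
    exact hadj.reachable.trans ih

lemma mem_part_of_reachable {T : TwoColoredPartition G} {p : Set V} (hp : p ∈ T.parts)
    {v w : V} (hv : v ∈ p) (h : (monoGraph G (decode T)).Reachable v w) : w ∈ p := by
  obtain ⟨q⟩ := h
  induction q with
  | nil => exact hv
  | @cons u x y h _ ih =>
    refine ih ?_
    obtain ⟨q, hq, hxq⟩ := T.covers x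
    rcases eq_or_ne q p with rfl | hne
    · exact hxq
    · exfalso
      have hne' : (⟨p, hp⟩ : T.parts) ≠ ⟨q, hq⟩ := by
        simp [Subtype.ext_iff, hne.symm]
      have := T.proper ⟨p, hp⟩ ⟨q, hq⟩ hne' ⟨u, hv, x, hxq, h.1⟩
      exact this (by rw [← decode_eq hp hv, ← decode_eq hq hxq, h.2])

lemma part_eq_supp {T : TwoColoredPartition G} {p : Set V} (hp : p ∈ T.parts) {v : V}
    (hv : v ∈ p) : p = ((monoGraph G (decode T)).connectedComponentMk v).supp := by
  apply Set.eq_of_subset_of_subset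
  · intro w hw
    rw [SimpleGraph.ConnectedComponent.mem_supp_iff, eq_comm, SimpleGraph.ConnectedComponent.eq]
    have hconn := T.conn p hp
    have hconst : ∀ x ∈ p, ∀ y ∈ p, decode T x = decode T y := fun x hx y hy => by
      rw [decode_eq hp hx, decode_eq hp hy]
    obtain ⟨q⟩ := hconn.preconnected ⟨v, hv⟩ ⟨w, hw⟩
    exact reachable_mono_of_induce hconst q
  · intro w hw
    rw [SimpleGraph.ConnectedComponent.mem_supp_iff, eq_comm, SimpleGraph.ConnectedComponent.eq]
      at hw
    exact mem_part_of_reachable hp hv hw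

lemma parts_toTCP_decode (T : TwoColoredPartition G) :
    (toTCP G (decode T)).parts = T.parts := by
  apply Set.eq_of_subset_of_subset
  · rintro q ⟨C, rfl⟩
    obtain ⟨v, hv⟩ := C.exists_rep
    have hv' : (monoGraph G (decode T)).connectedComponentMk v = C := hv
    obtain ⟨p, hp, hvp⟩ := T.covers v
    show C.supp ∈ T.parts
    rw [← hv']
    rw [← part_eq_supp hp hvp]
    exact hp
  · intro p hp
    obtain ⟨v, hv⟩ := T.nonempty p hp
    rw [part_eq_supp hp hv]
    exact ⟨_, rfl⟩

lemma TwoColoredPartition.ext' {T₁ T₂ : TwoColoredPartition G} (h : T₁.parts = T₂.parts)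
    (hc : ∀ (p : Set V) (h₁ : p ∈ T₁.parts) (h₂ : p ∈ T₂.parts),
      T₁.color ⟨p, h₁⟩ = T₂.color ⟨p, h₂⟩) : T₁ = T₂ := by
  obtain ⟨p₁, ne₁, cov₁, dis₁, con₁, col₁, prop₁⟩ := T₁
  obtain ⟨p₂, ne₂, cov₂, dis₂, con₂, col₂, prop₂⟩ := T₂
  dsimp at h
  subst h
  have : col₁ = col₂ := funext fun q => hc q.1 q.2 q.2
  subst this
  rfl

lemma toTCP_decode (T : TwoColoredPartition G) : toTCP G (decode T) = T := by
  refine TwoColoredPartition.ext' (parts_toTCP_decode T) ?_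
  intro p h₁ h₂
  obtain ⟨v, hv⟩ := T.nonempty p h₂
  have hconst : ∀ x ∈ p, ∀ y ∈ p, decode T x = decode T y := fun x hx y hy => by
    rw [decode_eq h₂ hx, decode_eq h₂ hy]
  show colorOf (decode T) p = _
  rw [colorOf_eq hconst hv, decode_eq h₂ hv]

end Inv

/-- `c n i` is the number of 2-colored partitions of `K₃ × Pₙ` of size `i`. -/
noncomputable def c (n i : ℕ) : ℕ :=
  Nat.card {T : TwoColoredPartition ((⊤ : SimpleGraph (Fin 3)) □ pathGraph n) // T.size = i}

/-- `tpoly n = ∑_{i ≥ 1} c(n,i) yⁱ ∈ ℤ[y]`. -/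
noncomputable def tpoly (n : ℕ) : Polynomial ℤ :=
  ∑ᶠ (i : ℕ) (_ : 1 ≤ i), Polynomial.monomial i (c n i : ℤ)

section Equiv
variable {V : Type*} {G : SimpleGraph V}

noncomputable def tcpEquiv (G : SimpleGraph V) : TwoColoredPartition G ≃ (V → Fin 2) :=
  ⟨decode, toTCP G, toTCP_decode, decode_toTCP⟩

/-- Number of monochromatic components of a coloring. -/
noncomputable def compCount (G : SimpleGraph V) (f : V → Fin 2) : ℕ :=
  Nat.card ((monoGraph G f).ConnectedComponent)

lemma size_toTCP (f : V → Fin 2) : (toTCP G f).size = compCount G f := by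
  rw [TwoColoredPartition.size, compCount]
  show (Set.range (fun C : (monoGraph G f).ConnectedComponent => C.supp)).ncard = _
  rw [← Nat.card_coe_set_eq, Nat.card_range_of_injective
    SimpleGraph.ConnectedComponent.supp_injective]

lemma size_eq (T : TwoColoredPartition G) : T.size = compCount G (decode T) := by
  conv_lhs => rw [← toTCP_decode T]
  exact size_toTCP _

lemma c_eq (n i : ℕ) :
    c n i = Nat.card {f : Fin 3 × Fin n → Fin 2 //
      compCount ((⊤ : SimpleGraph (Fin 3)) □ pathGraph n) f = i} := by
  refine Nat.card_congr (Equiv.subtypeEquiv (tcpEquiv _) fun T => ?_)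
  rw [size_eq]
  rfl

end Equiv

section Reduce
variable {n : ℕ}

local notation "Gn" => (SimpleGraph.boxProd (⊤ : SimpleGraph (Fin 3)) (pathGraph n))

lemma compCount_le (f : Fin 3 × Fin n → Fin 2) : compCount Gn f ≤ 3 * n := by
  have h1 : compCount Gn f ≤ Nat.card (Fin 3 × Fin n) :=
    Nat.card_le_card_of_surjective _ (fun C => C.exists_rep)
  simpa using h1

lemma compCount_pos (hn : 1 ≤ n) (f : Fin 3 × Fin n → Fin 2) : 1 ≤ compCount Gn f := by
  have : Nonempty (Fin 3 × Fin n) := ⟨(0, ⟨0, hn⟩)⟩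
  have : Nonempty ((monoGraph Gn f).ConnectedComponent) :=
    ⟨(monoGraph Gn f).connectedComponentMk this.some⟩
  exact Nat.card_pos

open Classical in
lemma finsum_reduce (hn : 1 ≤ n) :
    ∑ᶠ (i : ℕ) (_ : 1 ≤ i), (i * c n i : ℚ)
      = ∑ f : Fin 3 × Fin n → Fin 2, (compCount Gn f : ℚ) := by
  classical
  have hstep : ∑ᶠ (i : ℕ) (_ : 1 ≤ i), (i * c n i : ℚ)
      = ∑ i ∈ Finset.Icc 1 (3 * n), (i * c n i : ℚ) := by
    apply finsum_cond_eq_sum_of_cond_iff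
    intro x hx
    constructor
    · intro hx1
      have hc : c n x ≠ 0 := by
        intro h
        apply hx
        simp [h]
      rw [Finset.mem_Icc]
      refine ⟨hx1, ?_⟩
      rw [c_eq] at hc
      obtain ⟨f, hf⟩ := (Nat.card_ne_zero.mp hc).1
      exact hf ▸ compCount_le f
    · intro h
      exact (Finset.mem_Icc.mp h).1
  rw [hstep]
  have hc' : ∀ i, c n i
      = (Finset.univ.filter (fun f : Fin 3 × Fin n → Fin 2 => compCount Gn f = i)).card := by
    intro i
    rw [c_eq, Nat.card_eq_fintype_card, Fintype.card_subtype]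
  have hfib := Finset.sum_fiberwise_of_maps_to
    (s := (Finset.univ : Finset (Fin 3 × Fin n → Fin 2)))
    (g := fun f => compCount Gn f)
    (t := Finset.Icc 1 (3 * n))
    (fun f _ => Finset.mem_Icc.mpr ⟨compCount_pos hn f, compCount_le f⟩)
    (fun f => (compCount Gn f : ℚ))
  rw [← hfib]
  apply Finset.sum_congr rfl
  intro i _
  rw [hc']
  push_cast
  rw [Finset.sum_congr rfl (fun f hf => by rw [(Finset.mem_filter.mp hf).2]),
    Finset.sum_const, nsmul_eq_mul, mul_comm]

end Reduce

section Core
variable {n : ℕ}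

local notation "Gn" => (SimpleGraph.boxProd (⊤ : SimpleGraph (Fin 3)) (pathGraph n))

/-- leaders: pairs (layer, color) that are the "birth" of a monochromatic component. -/
def leaders (n : ℕ) (f : Fin 3 × Fin n → Fin 2) : Finset (Fin n × Fin 2) :=
  Finset.univ.filter (fun jc => (∃ p, f (p, jc.1) = jc.2) ∧
    ∀ j' : Fin n, j'.val + 1 = jc.1.val → ¬ ∃ p, f (p, j') = jc.2 ∧ f (p, jc.1) = jc.2)

variable {f : Fin 3 × Fin n → Fin 2}

lemma Gn_adj {a b : Fin 3} {i j : Fin n} :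
    ((⊤ : SimpleGraph (Fin 3)) □ pathGraph n).Adj (a, i) (b, j) ↔
    (a ≠ b ∧ i = j) ∨ ((i.val + 1 = j.val ∨ j.val + 1 = i.val) ∧ a = b) := by
  rw [SimpleGraph.boxProd_adj]
  simp [pathGraph_adj]

lemma same_layer_reachable {a b : Fin 3} {j : Fin n} (h : f (a, j) = f (b, j)) :
    (monoGraph Gn f).Reachable (a, j) (b, j) := by
  rcases eq_or_ne a b with rfl | hne
  · rfl
  · exact SimpleGraph.Adj.reachable ⟨Gn_adj.mpr (Or.inl ⟨hne, rfl⟩), h⟩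

lemma crossing_walk {u v : Fin 3 × Fin n} (w : (monoGraph Gn f).Walk u v) (k : ℕ)
    (hu : u.2.val ≤ k) (hv : k < v.2.val) :
    ∃ (p : Fin 3) (j j' : Fin n), j.val = k ∧ j'.val = k + 1 ∧
      f (p, j) = f u ∧ f (p, j') = f u := by
  induction w with
  | nil => omega
  | @cons u x v h q ih =>
    have hfu : f u = f x := h.2
    by_cases hx : x.2.val ≤ k
    · obtain ⟨p, j, j', h1, h2, h3, h4⟩ := ih hx hv
      exact ⟨p, j, j', h1, h2, by rw [h3, ← hfu], by rw [h4, ← hfu]⟩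
    · push_neg at hx
      obtain ⟨a, i⟩ := u
      obtain ⟨b, i'⟩ := x
      simp only at hfu hu hx ⊢
      rcases Gn_adj.mp h.1 with ⟨_, hii⟩ | ⟨hpath, hab⟩
      · rw [hii] at hu; omega
      · subst hab
        rcases hpath with h1 | h1
        · have hik : i.val = k := by omega
          have hik' : i'.val = k + 1 := by omega
          exact ⟨a, i, i', hik, hik', rfl, hfu.symm⟩
        · omega

lemma crossing {u v : Fin 3 × Fin n} (h : (monoGraph Gn f).Reachable u v) (k : ℕ)
    (hu : u.2.val ≤ k) (hv : k < v.2.val) :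
    ∃ (p : Fin 3) (j j' : Fin n), j.val = k ∧ j'.val = k + 1 ∧
      f (p, j) = f u ∧ f (p, j') = f u := by
  obtain ⟨w⟩ := h
  exact crossing_walk w k hu hv

lemma not_reachable_of_leaders {j₁ j₂ : Fin n} {c : Fin 2}
    (h₂ : (j₂, c) ∈ leaders n f) {p₁ p₂ : Fin 3}
    (hf1 : f (p₁, j₁) = c) (hf2 : f (p₂, j₂) = c) (hlt : j₁.val < j₂.val) :
    ¬ (monoGraph Gn f).Reachable (p₁, j₁) (p₂, j₂) := by
  intro h
  have h1le : j₁.val ≤ j₂.val - 1 := by omega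
  have h2lt : j₂.val - 1 < j₂.val := by omega
  obtain ⟨p, j, j', hj, hj', hfp, hfp'⟩ := crossing h (j₂.val - 1) h1le h2lt
  have hj'2 : j' = j₂ := Fin.ext (by omega)
  rw [hj'2] at hfp'
  have hcond := (Finset.mem_filter.mp h₂).2.2 j (show j.val + 1 = j₂.val by omega)
  exact hcond ⟨p, by rw [hfp, hf1], by rw [hfp', hf1]⟩

open Classical in
lemma compCount_eq_leaders (f : Fin 3 × Fin n → Fin 2) :
    compCount Gn f = (leaders n f).card := by
  classical
  have hmem : ∀ jc ∈ leaders n f, ∃ p : Fin 3, f (p, jc.1) = jc.2 :=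
    fun jc h => (Finset.mem_filter.mp h).2.1
  let Φ : {jc // jc ∈ leaders n f} → (monoGraph Gn f).ConnectedComponent :=
    fun jc => (monoGraph Gn f).connectedComponentMk ((hmem jc.1 jc.2).choose, jc.1.1)
  have hΦcol : ∀ jc : {jc // jc ∈ leaders n f},
      f ((hmem jc.1 jc.2).choose, jc.1.1) = jc.1.2 := fun jc => (hmem jc.1 jc.2).choose_spec
  have hinj : Function.Injective Φ := by
    rintro ⟨⟨j₁, c₁⟩, h₁⟩ ⟨⟨j₂, c₂⟩, h₂⟩ heq
    have hreach := SimpleGraph.ConnectedComponent.eq.mp heq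
    have hc : c₁ = c₂ :=
      (hΦcol ⟨(j₁, c₁), h₁⟩).symm.trans
        ((eq_of_reachable hreach).trans (hΦcol ⟨(j₂, c₂), h₂⟩))
    subst hc
    have hj : j₁ = j₂ := by
      rcases lt_trichotomy j₁.val j₂.val with hlt | heqv | hgt
      · exact absurd hreach (not_reachable_of_leaders h₂
          (hΦcol ⟨(j₁, c₁), h₁⟩) (hΦcol ⟨(j₂, c₁), h₂⟩) hlt)
      · exact Fin.ext heqv
      · exact absurd hreach.symm (not_reachable_of_leaders h₁
          (hΦcol ⟨(j₂, c₁), h₂⟩) (hΦcol ⟨(j₁, c₁), h₁⟩) hgt)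
    subst hj
    rfl
  have hsurj : Function.Surjective Φ := by
    intro C
    have hs : (Finset.univ.filter (fun v : Fin 3 × Fin n => v ∈ C.supp)).Nonempty := by
      obtain ⟨v, hv⟩ := C.exists_rep
      exact ⟨v, Finset.mem_filter.mpr ⟨Finset.mem_univ _, hv⟩⟩
    obtain ⟨v, hv, hmin⟩ := Finset.exists_min_image _ (fun v => v.2.val) hs
    have hvC : (monoGraph Gn f).connectedComponentMk v = C :=
      (Finset.mem_filter.mp hv).2
    have hlead : (v.2, f v) ∈ leaders n f := by
      refine Finset.mem_filter.mpr ⟨Finset.mem_univ _, ⟨v.1, by rw [Prod.mk.eta]⟩, ?_⟩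
      rintro j' hj' ⟨p, hp1, hp2⟩
      have hr1 : (monoGraph Gn f).Reachable (p, v.2) (v.1, v.2) :=
        same_layer_reachable (by rw [hp2, Prod.mk.eta])
      have hadj : (monoGraph Gn f).Adj (p, j') (p, v.2) :=
        ⟨Gn_adj.mpr (Or.inr ⟨Or.inl hj', rfl⟩), by rw [hp1, hp2]⟩
      have hmem' : (p, j') ∈ Finset.univ.filter (fun v : Fin 3 × Fin n => v ∈ C.supp) := by
        refine Finset.mem_filter.mpr ⟨Finset.mem_univ _, ?_⟩
        show (monoGraph Gn f).connectedComponentMk (p, j') = C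
        rw [← hvC]
        apply SimpleGraph.ConnectedComponent.eq.mpr
        exact (hadj.reachable.trans hr1).trans
          (by rw [Prod.mk.eta])
      have h5 : v.2.val ≤ j'.val := hmin _ hmem'
      have h6 : j'.val + 1 = v.2.val := hj'
      omega
    refine ⟨⟨(v.2, f v), hlead⟩, ?_⟩
    show (monoGraph Gn f).connectedComponentMk _ = C
    rw [← hvC]
    apply SimpleGraph.ConnectedComponent.eq.mpr
    have := hΦcol ⟨(v.2, f v), hlead⟩
    exact (same_layer_reachable (a := (hmem (v.2, f v) hlead).choose) (b := v.1)
      (by rw [this, Prod.mk.eta])).trans (by rw [Prod.mk.eta])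
  rw [compCount, ← Nat.card_eq_finsetCard,
    Nat.card_congr (Equiv.ofBijective Φ ⟨hinj, hsurj⟩).symm]

end Core

lemma card_ne {ι : Type*} [Fintype ι] [DecidableEq ι] (i : ι) :
    Fintype.card {j : ι // j ≠ i} = Fintype.card ι - 1 := by
  rw [Fintype.card_subtype_compl, Fintype.card_subtype_eq]

lemma sum_eval_one {ι X : Type*} [Fintype ι] [DecidableEq ι] [Fintype X] (i : ι) (F : X → ℕ) :
    ∑ g : ι → X, F (g i) = (Fintype.card X) ^ (Fintype.card ι - 1) * ∑ x, F x := by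
  rw [Fintype.sum_equiv (Equiv.funSplitAt i X) _ (fun p => F p.1) (fun g => by simp)]
  rw [Fintype.sum_prod_type, Finset.sum_comm]
  simp only [Finset.sum_const, Finset.card_univ, smul_eq_mul, ← Finset.sum_mul]
  simp [card_ne, mul_comm, Fintype.card_fun]

lemma sum_eval_two {ι X : Type*} [Fintype ι] [DecidableEq ι] [Fintype X] {i i' : ι}
    (h : i' ≠ i) (F : X → X → ℕ) :
    ∑ g : ι → X, F (g i) (g i')
      = (Fintype.card X) ^ (Fintype.card ι - 2) * ∑ x, ∑ y, F x y := by
  rw [Fintype.sum_equiv (Equiv.funSplitAt i X) _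
    (fun p => F p.1 (p.2 ⟨i', h⟩)) (fun g => by simp)]
  rw [Fintype.sum_prod_type]
  have inner : ∀ x, ∑ r : {j : ι // j ≠ i} → X, F x (r ⟨i', h⟩)
      = (Fintype.card X) ^ (Fintype.card ι - 2) * ∑ y, F x y := by
    intro x
    rw [sum_eval_one (⟨i', h⟩ : {j : ι // j ≠ i}) (fun y => F x y), card_ne]
    have : Fintype.card ι - 1 - 1 = Fintype.card ι - 2 := by omega
    rw [this]
  rw [Finset.sum_congr rfl (fun x _ => inner x), ← Finset.mul_sum]

section Count

/-- Transpose-curry equivalence. -/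
def layerEquiv (n : ℕ) : (Fin 3 × Fin n → Fin 2) ≃ (Fin n → Fin 3 → Fin 2) where
  toFun f := fun j p => f (p, j)
  invFun g := fun x => g x.2 x.1
  left_inv f := rfl
  right_inv g := rfl

lemma count7 : ∀ c : Fin 2,
    (∑ x : Fin 3 → Fin 2, if ∃ p, x p = c then 1 else 0) = 7 := by decide

lemma count19 : ∀ c : Fin 2,
    (∑ x : Fin 3 → Fin 2, ∑ y : Fin 3 → Fin 2,
      if (∃ p, y p = c) ∧ ¬ ∃ p, x p = c ∧ y p = c then 1 else 0) = 19 := by decide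

lemma total_count (n : ℕ) (hn : 1 ≤ n) :
    (∑ f : Fin 3 × Fin n → Fin 2, (leaders n f).card)
      = 2 * (7 * 8 ^ (n - 1)) + 2 * ((n - 1) * (19 * 8 ^ (n - 2))) := by
  classical
  have hcard : ∀ f, (leaders n f).card = ∑ jc : Fin n × Fin 2,
      (if (∃ p, f (p, jc.1) = jc.2) ∧
        (∀ j' : Fin n, j'.val + 1 = jc.1.val →
          ¬ ∃ p, f (p, j') = jc.2 ∧ f (p, jc.1) = jc.2) then 1 else 0) := by
    intro f
    rw [leaders, Finset.card_filter]
  rw [Finset.sum_congr rfl (fun f _ => hcard f), Finset.sum_comm]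
  have key : ∀ jc : Fin n × Fin 2,
      (∑ f : Fin 3 × Fin n → Fin 2,
        (if (∃ p, f (p, jc.1) = jc.2) ∧
          (∀ j' : Fin n, j'.val + 1 = jc.1.val →
            ¬ ∃ p, f (p, j') = jc.2 ∧ f (p, jc.1) = jc.2) then 1 else 0))
      = if jc.1.val = 0 then 7 * 8 ^ (n - 1) else 19 * 8 ^ (n - 2) := by
    rintro ⟨j, c⟩
    rw [← Fintype.sum_equiv (layerEquiv n).symm _ _ (fun g => rfl)]
    simp only [layerEquiv, Equiv.coe_fn_symm_mk]
    by_cases hj : j.val = 0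
    · rw [if_pos hj]
      have hiff : ∀ g : Fin n → Fin 3 → Fin 2,
          ((∃ p, g j p = c) ∧ (∀ j' : Fin n, j'.val + 1 = j.val →
            ¬ ∃ p, g j' p = c ∧ g j p = c)) ↔ (∃ p, g j p = c) := by
        intro g
        constructor
        · exact fun h => h.1
        · exact fun h => ⟨h, fun j' hj' => absurd (hj ▸ hj') (by omega)⟩
      rw [Finset.sum_congr rfl (fun g _ => by exact if_congr (hiff g) rfl rfl)]
      rw [sum_eval_one (X := Fin 3 → Fin 2) j (fun x => if ∃ p, x p = c then 1 else 0)]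
      rw [count7 c]
      simp [Fintype.card_fun, mul_comm]
    · rw [if_neg hj]
      have hj1 : j.val - 1 < n := by omega
      set j' : Fin n := ⟨j.val - 1, hj1⟩ with hj'def
      have hj'succ : j'.val + 1 = j.val := by simp [hj'def]; omega
      have hiff : ∀ g : Fin n → Fin 3 → Fin 2,
          ((∃ p, g j p = c) ∧ (∀ j'' : Fin n, j''.val + 1 = j.val →
            ¬ ∃ p, g j'' p = c ∧ g j p = c))
          ↔ ((∃ p, g j p = c) ∧ ¬ ∃ p, g j' p = c ∧ g j p = c) := by
        intro g
        constructor
        · exact fun h => ⟨h.1, h.2 j' hj'succ⟩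
        · refine fun h => ⟨h.1, fun j'' hj'' => ?_⟩
          have : j'' = j' := Fin.ext (by omega)
          rw [this]
          exact h.2
      rw [Finset.sum_congr rfl (fun g _ => by exact if_congr (hiff g) rfl rfl)]
      have hne : j ≠ j' := by
        intro h
        have := congrArg Fin.val h
        simp [hj'def] at this
        omega
      rw [sum_eval_two (X := Fin 3 → Fin 2) hne (fun x y => if (∃ p, y p = c) ∧ ¬ ∃ p, x p = c ∧ y p = c
        then 1 else 0)]
      rw [count19 c]
      simp [Fintype.card_fun, mul_comm]
  rw [Finset.sum_congr rfl (fun jc _ => key jc)]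
  rw [Fintype.sum_prod_type_right]
  have hinner : ∀ c : Fin 2, (∑ j : Fin n,
      if j.val = 0 then 7 * 8 ^ (n - 1) else 19 * 8 ^ (n - 2))
      = 7 * 8 ^ (n - 1) + (n - 1) * (19 * 8 ^ (n - 2)) := by
    intro c
    rw [Finset.sum_ite]
    have h1 : (Finset.univ.filter (fun j : Fin n => j.val = 0)) = {⟨0, hn⟩} := by
      ext j
      simp [Fin.ext_iff]
    have h2 : (Finset.univ.filter (fun j : Fin n => ¬ j.val = 0)).card = n - 1 := by
      have := Finset.card_filter_add_card_filter_not
        (s := (Finset.univ : Finset (Fin n))) (p := fun j : Fin n => j.val = 0)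
      simp only [h1] at this
      simp only [Finset.card_univ, Fintype.card_fin, Finset.card_singleton] at this
      omega
    rw [h1, Finset.sum_const, Finset.sum_const, h2]
    simp
  rw [Finset.sum_congr rfl (fun c _ => hinner c)]
  simp only [Finset.sum_const, Finset.card_univ, Fintype.card_fin, smul_eq_mul]
  ring

end Count

/-- For every `n ≥ 1`, `∑_{i ≥ 1} i·c(n,i) = 2^(3n-5)·(37 + 19n)`; equivalently, the
expected size of the partition obtained from a uniformly random 2-coloring of the `3n`
vertices of `K₃ × Pₙ` is `2^(3n-5)·(37 + 19n)/2^(3n)`. -/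
theorem expected_size_K3_times_path (n : ℕ) (hn : 1 ≤ n) :
    ∑ᶠ (i : ℕ) (_ : 1 ≤ i), (i * c n i : ℚ)
      = 2 ^ (3 * (n : ℤ) - 5) * (37 + 19 * n) := by
  rw [finsum_reduce hn]
  have hmain : (∑ f : Fin 3 × Fin n → Fin 2,
      (compCount ((⊤ : SimpleGraph (Fin 3)) □ pathGraph n) f : ℚ))
      = ((2 * (7 * 8 ^ (n - 1)) + 2 * ((n - 1) * (19 * 8 ^ (n - 2))) : ℕ) : ℚ) := by
    rw [← Nat.cast_sum]
    congr 1
    rw [Finset.sum_congr rfl (fun f _ => compCount_eq_leaders f), total_count n hn]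
  rw [hmain]
  obtain _ | n := n
  · omega
  obtain _ | m := n
  · rw [show (3 * (((0 : ℕ) + 1 : ℕ) : ℤ) - 5) = -2 by norm_num]
    rw [show ((2 : ℚ) ^ (-2 : ℤ)) = 1/4 by norm_num]
    norm_num
  · have h1 : m + 2 - 1 = m + 1 := rfl
    have h2 : m + 2 - 2 = m := rfl
    rw [h1, h2]
    have he : (3 * ((m + 2 : ℕ) : ℤ) - 5) = ((3 * m + 1 : ℕ) : ℤ) := by push_cast; ring
    rw [he, zpow_natCast]
    push_cast
    rw [show (8 : ℚ) = 2 ^ 3 by norm_num, ← pow_mul, ← pow_mul]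
    ring
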